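/- Let m ≥ 1 be an integer and δ ∈ ℂ with -1/2 < Re δ < 0. Then the constant function 1 lies in the closure, in L²(𝔻, μ^{(m)}) where dμ^{(m)}(z) = (1-|z|²)^{m-1} dσ(z), of the linear span of the functions z ↦ (1-z)^δ z^k, k = 0, 1, 2, …. -/

import Mathlib

open MeasureTheory Metric Set

lemma slit_aux {z : ℂ} (h1 : ‖z‖ ≤ 1) (h2 : z ≠ 1) : 1 - z ∈ Complex.slitPlane := by
  rw [Complex.mem_slitPlane_iff]
  by_cases him : z.im = 0
  · left
    have hre : z.re ≤ 1 := le_trans (le_trans (le_abs_self _) (Complex.abs_re_le_norm z)) h1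
    have hne : z.re ≠ 1 := fun h => h2 (Complex.ext h him)
    have : z.re < 1 := lt_of_le_of_ne hre hne
    simp only [Complex.sub_re, Complex.one_re]
    linarith
  · right
    simpa [Complex.sub_im, Complex.one_im] using him

lemma approx_aux (δ : ℂ) (hδ₂ : δ.re < 0) {η : ℝ} (hη : 0 < η) :
    ∃ N : ℕ, ∃ a : ℕ → ℂ, ∀ z ∈ Metric.ball (0:ℂ) 1,
      ‖(∑ k ∈ Finset.range N, a k * z ^ k) - (1 - z) ^ (-δ)‖ ≤ η := by
  set f : ℂ → ℂ := fun z => (1 - z) ^ (-δ) with hf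
  have hre : 0 < (-δ).re := by simp only [Complex.neg_re]; linarith
  have hcont : ContinuousOn f (closedBall (0:ℂ) 1) := by
    intro z hz
    rw [mem_closedBall_zero_iff] at hz
    apply ContinuousAt.continuousWithinAt
    by_cases h : z = 1
    · subst h
      have h0 : ContinuousAt (fun p : ℂ × ℂ => p.1 ^ p.2) ((1:ℂ) - 1, -δ) := by
        rw [show (1:ℂ) - 1 = 0 by ring]
        exact Complex.continuousAt_cpow_zero_of_re_pos hre
      have hinner : ContinuousAt (fun z : ℂ => ((1 - z, -δ) : ℂ × ℂ)) 1 :=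
        ((continuous_const.sub continuous_id).prodMk continuous_const).continuousAt
      exact ContinuousAt.comp (g := fun p : ℂ × ℂ => p.1 ^ p.2)
        (f := fun z : ℂ => ((1 - z, -δ) : ℂ × ℂ)) h0 hinner
    · exact ContinuousAt.comp (g := (· ^ (-δ))) (f := fun z : ℂ => 1 - z)
        (continuousAt_cpow_const (slit_aux hz h))
        ((continuous_const.sub continuous_id).continuousAt)
  have huc := (isCompact_closedBall (0:ℂ) 1).uniformContinuousOn_of_continuous hcont
  rw [Metric.uniformContinuousOn_iff] at huc
  obtain ⟨d, hd, hduc⟩ := huc (η/2) (by linarith)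
  set r : ℝ := max (1/2) (1 - d/2) with hrdef
  have hr0 : 0 < r := lt_of_lt_of_le (by norm_num) (le_max_left _ _)
  have hr1 : r < 1 := by
    apply max_lt (by norm_num)
    linarith
  have hrd : 1 - r ≤ d/2 := by
    have := le_max_right (1/2) (1 - d/2)
    linarith
  set g : ℂ → ℂ := fun z => f ((r:ℂ) * z) with hg
  have hclose : ∀ z ∈ Metric.ball (0:ℂ) 1, dist (g z) (f z) < η/2 := by
    intro z hz
    rw [mem_ball_zero_iff] at hz
    have hz1 : z ∈ closedBall (0:ℂ) 1 := by
      rw [mem_closedBall_zero_iff]; exact hz.le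
    have hz2 : (r:ℂ) * z ∈ closedBall (0:ℂ) 1 := by
      rw [mem_closedBall_zero_iff]
      calc ‖(r:ℂ) * z‖ = r * ‖z‖ := by
            rw [norm_mul, Complex.norm_real, Real.norm_of_nonneg hr0.le]
        _ ≤ 1 * 1 := mul_le_mul hr1.le hz.le (norm_nonneg _) zero_le_one
        _ = 1 := one_mul 1
    apply hduc _ hz2 _ hz1
    rw [dist_eq_norm]
    have he : (r:ℂ) * z - z = ((r - 1 : ℝ) : ℂ) * z := by push_cast; ring
    rw [he, norm_mul, Complex.norm_real]
    have hn : ‖r - 1‖ = 1 - r := by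
      rw [Real.norm_eq_abs, abs_of_nonpos (by linarith)]; ring
    rw [hn]
    calc (1 - r) * ‖z‖ ≤ (d/2) * 1 :=
          mul_le_mul hrd hz.le (norm_nonneg _) (by linarith)
      _ < d := by linarith
  -- power series for g
  set Rr : ℝ := (1 + 1/r)/2 with hRr
  have hrinv : 1 < 1/r := by
    rw [lt_div_iff₀ hr0]; linarith
  have hRr1 : 1 < Rr := by rw [hRr]; linarith
  have hRrr : Rr < 1/r := by rw [hRr]; linarith
  set R : NNReal := ⟨Rr, by linarith⟩ with hR
  have hdiff : DifferentiableOn ℂ g (closedBall (0:ℂ) R) := by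
    intro z hz
    rw [mem_closedBall_zero_iff] at hz
    apply DifferentiableAt.differentiableWithinAt
    have hmem : ‖(r:ℂ) * z‖ < 1 := by
      have : ‖(r:ℂ) * z‖ = r * ‖z‖ := by
        rw [norm_mul, Complex.norm_real, Real.norm_of_nonneg hr0.le]
      have h2 : r * ‖z‖ ≤ r * Rr := by
        apply mul_le_mul_of_nonneg_left _ hr0.le
        exact hz
      have h3 : r * Rr < 1 := by
        have := (lt_div_iff₀ hr0).mp hRrr
        linarith [this]
      calc ‖(r:ℂ) * z‖ = ‖(r:ℂ) * z‖ := rfl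
        _ = r * ‖z‖ := this
        _ ≤ r * Rr := h2
        _ < 1 := h3
    have hne : (r:ℂ) * z ≠ 1 := by
      intro h
      rw [h] at hmem
      simp at hmem
    have hslit : 1 - (r:ℂ) * z ∈ Complex.slitPlane := slit_aux hmem.le hne
    exact ((differentiableAt_const _).sub
      ((differentiableAt_const _).mul differentiableAt_id)).cpow (differentiableAt_const _) hslit
  have hRpos : 0 < R := by
    rw [← NNReal.coe_lt_coe]
    exact lt_trans zero_lt_one hRr1
  have hfp := hdiff.hasFPowerSeriesOnBall hRpos
  have h1R : ((1:NNReal) : ENNReal) < (R : ENNReal) := by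
    rw [ENNReal.coe_lt_coe, ← NNReal.coe_lt_coe]
    exact hRr1
  have htu := hfp.tendstoUniformlyOn h1R
  rw [Metric.tendstoUniformlyOn_iff] at htu
  obtain ⟨N, hN⟩ := (htu (η/2) (by linarith)).exists
  set p := cauchyPowerSeries g 0 R with hp
  refine ⟨N, fun k => p.coeff k, ?_⟩
  intro z hz
  have hz' : z ∈ Metric.ball (0:ℂ) ((1:NNReal):ℝ) := by simpa using hz
  have hN' := hN z hz'
  have hps : p.partialSum N z = ∑ k ∈ Finset.range N, p.coeff k * z ^ k := by
    unfold FormalMultilinearSeries.partialSum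
    refine Finset.sum_congr rfl fun k _ => ?_
    rw [FormalMultilinearSeries.apply_eq_pow_smul_coeff, smul_eq_mul, mul_comm]
  calc ‖(∑ k ∈ Finset.range N, p.coeff k * z ^ k) - f z‖
      = dist (∑ k ∈ Finset.range N, p.coeff k * z ^ k) (f z) := by
        rw [Complex.dist_eq]
    _ ≤ dist (∑ k ∈ Finset.range N, p.coeff k * z ^ k) (g (0 + z))
        + dist (g (0 + z)) (f z) := dist_triangle _ _ _
    _ ≤ η/2 + η/2 := by
        apply add_le_add
        · rw [dist_comm, ← hps]
          exact hN'.le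
        · rw [zero_add]
          exact (hclose z hz).le
    _ = η := by ring

lemma integrable_dom {aa : ℝ} (haa : -1 < aa) (haa0 : aa < 0) :
    IntegrableOn (fun z : ℂ => (1 - z.re) ^ aa) (Metric.ball (0:ℂ) 1) volume := by
  have hA : IntegrableOn (fun x : ℝ => x ^ aa) (Ioo (0:ℝ) 2) volume :=
    (intervalIntegral.integrableOn_Ioo_rpow_iff (by norm_num)).mpr haa
  have hB : IntegrableOn (fun x : ℝ => (1 - x) ^ aa) (Ioo (-1:ℝ) 1) volume := by
    have hmp : MeasurePreserving (fun x : ℝ => 1 - x) volume volume :=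
      Measure.measurePreserving_sub_left volume 1
    have hemb : MeasurableEmbedding (fun x : ℝ => 1 - x) :=
      (MeasurableEquiv.subLeft (1:ℝ)).measurableEmbedding
    have h := (hmp.integrableOn_comp_preimage hemb
      (f := fun x : ℝ => x ^ aa) (s := Ioo (0:ℝ) 2)).mpr hA
    have hpre : (fun x : ℝ => 1 - x) ⁻¹' (Ioo (0:ℝ) 2) = Ioo (-1:ℝ) 1 := by
      ext x
      simp only [mem_preimage, mem_Ioo]
      constructor <;> intro h <;> exact ⟨by linarith [h.1, h.2], by linarith [h.1, h.2]⟩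
    rw [hpre] at h
    exact h
  haveI : IsFiniteMeasure (volume.restrict (Ioo (-1:ℝ) 1)) := by
    constructor
    rw [Measure.restrict_apply_univ, Real.volume_Ioo]
    exact ENNReal.ofReal_lt_top
  have hone : Integrable (fun _ : ℝ => (1:ℝ)) (volume.restrict (Ioo (-1:ℝ) 1)) :=
    integrable_const 1
  have hCprod : Integrable (fun p : ℝ × ℝ => (1 - p.1) ^ aa)
      ((volume.restrict (Ioo (-1:ℝ) 1)).prod (volume.restrict (Ioo (-1:ℝ) 1))) := by
    simpa using hB.mul_prod hone
  rw [Measure.prod_restrict, ← Measure.volume_eq_prod] at hCprod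
  have hmpc := Complex.volume_preserving_equiv_real_prod
  have hembc : MeasurableEmbedding (Complex.measurableEquivRealProd) :=
    Complex.measurableEquivRealProd.measurableEmbedding
  have hDint := (hmpc.integrableOn_comp_preimage hembc
    (f := fun p : ℝ × ℝ => (1 - p.1) ^ aa)
    (s := (Ioo (-1:ℝ) 1) ×ˢ (Ioo (-1:ℝ) 1))).mpr hCprod
  have heq : ((fun p : ℝ × ℝ => (1 - p.1) ^ aa) ∘ Complex.measurableEquivRealProd)
      = fun z : ℂ => (1 - z.re) ^ aa := rfl
  rw [heq] at hDint
  apply hDint.mono_set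
  intro z hz
  rw [mem_ball_zero_iff] at hz
  have h1 : |z.re| < 1 := lt_of_le_of_lt (Complex.abs_re_le_norm z) hz
  have h2 : |z.im| < 1 := lt_of_le_of_lt (Complex.abs_im_le_norm z) hz
  rw [abs_lt] at h1 h2
  simp only [mem_preimage, Complex.measurableEquivRealProd, mem_prod, mem_Ioo]
  exact ⟨⟨h1.1, h1.2⟩, ⟨h2.1, h2.2⟩⟩

/-- For -1/2 < Re δ < 0, the constant 1 lies in the
L²(𝔻,(1-|z|²)^{m-1}dσ)-closure of span{(1-z)^δ z^k : k ∈ ℕ}. -/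
theorem one_mem_closure_span_neg (m : ℕ) (hm : 1 ≤ m) (δ : ℂ)
    (hδ₁ : -1/2 < δ.re) (hδ₂ : δ.re < 0) :
    ∀ ε > (0:ℝ), ∃ c : ℕ →₀ ℂ,
      ∫ z in Metric.ball (0:ℂ) 1,
        ‖(∑ k ∈ c.support, c k * (1 - z) ^ δ * z ^ k) - 1‖ ^ 2 *
          (1 - ‖z‖ ^ 2) ^ (m - 1) < ε := by
  intro ε hε
  set C : ℝ := Real.exp (Real.pi * |δ.im|) with hC
  have hCpos : 0 < C := Real.exp_pos _
  have haa : -1 < 2 * δ.re := by linarith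
  have haa0 : 2 * δ.re < 0 := by linarith
  set D : ℂ → ℝ := fun z => (1 - z.re) ^ (2 * δ.re) with hD
  have hI : IntegrableOn D (Metric.ball (0:ℂ) 1) volume := integrable_dom haa haa0
  set I : ℝ := ∫ z in Metric.ball (0:ℂ) 1, D z with hIdef
  have hInn : 0 ≤ I := by
    apply setIntegral_nonneg measurableSet_ball
    intro z hz
    rw [mem_ball_zero_iff] at hz
    have : z.re < 1 := lt_of_le_of_lt (le_trans (le_abs_self _) (Complex.abs_re_le_norm z)) hz
    exact Real.rpow_nonneg (by linarith) _
  set B : ℝ := C^2 * (I + 1) with hB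
  have hBpos : 0 < B := by positivity
  set η : ℝ := Real.sqrt (ε / B) with hηdef
  have hη : 0 < η := Real.sqrt_pos.mpr (div_pos hε hBpos)
  have hη2 : η^2 = ε / B := Real.sq_sqrt (le_of_lt (div_pos hε hBpos))
  obtain ⟨N, a, hNa⟩ := approx_aux δ hδ₂ hη
  set c : ℕ →₀ ℂ := Finsupp.onFinset (Finset.range N)
    (fun k => if k ∈ Finset.range N then a k else 0)
    (fun k hk => by by_contra h; exact hk (if_neg h)) with hc
  refine ⟨c, ?_⟩
  have hsum : ∀ z : ℂ, (∑ k ∈ c.support, c k * (1 - z) ^ δ * z ^ k)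
      = (1 - z) ^ δ * ∑ k ∈ Finset.range N, a k * z ^ k := by
    intro z
    rw [Finset.sum_subset Finsupp.support_onFinset_subset (fun k _ hk => by
      rw [Finsupp.notMem_support_iff.mp hk, zero_mul, zero_mul])]
    rw [Finset.mul_sum]
    refine Finset.sum_congr rfl fun k hk => ?_
    have hck : c k = a k := by
      rw [hc, Finsupp.onFinset_apply, if_pos hk]
    rw [hck]; ring
  -- pointwise bound
  have hpt : ∀ z ∈ Metric.ball (0:ℂ) 1,
      ‖(∑ k ∈ c.support, c k * (1 - z) ^ δ * z ^ k) - 1‖ ^ 2 *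
        (1 - ‖z‖ ^ 2) ^ (m - 1) ≤ (η^2 * C^2) * D z := by
    intro z hzball
    have habs : ‖z‖ < 1 := mem_ball_zero_iff.mp hzball
    have hz1 : (1:ℂ) - z ≠ 0 := by
      intro h
      rw [sub_eq_zero] at h
      rw [← h] at habs
      simp at habs
    have hrez : z.re < 1 :=
      lt_of_le_of_lt (le_trans (le_abs_self _) (Complex.abs_re_le_norm z)) habs
    have hb0 : (0:ℝ) < 1 - z.re := by linarith
    have hne : (1 - z) ^ δ ≠ 0 := by
      rw [Ne, Complex.cpow_eq_zero_iff]
      rintro ⟨h, -⟩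
      exact hz1 h
    have hinv : (1 - z) ^ δ * (1 - z) ^ (-δ) = 1 := by
      rw [Complex.cpow_neg]
      exact mul_inv_cancel₀ hne
    have hkey : (∑ k ∈ c.support, c k * (1 - z) ^ δ * z ^ k) - 1
        = (1 - z) ^ δ * ((∑ k ∈ Finset.range N, a k * z ^ k) - (1 - z) ^ (-δ)) := by
      rw [hsum z, mul_sub, hinv]
    have hcb : ‖(1 - z) ^ δ‖ ≤ C * (1 - z.re) ^ δ.re := by
      rw [Complex.norm_cpow_of_ne_zero hz1]
      have h1 : ‖1 - z‖ ^ δ.re ≤ (1 - z.re) ^ δ.re := by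
        apply Real.rpow_le_rpow_of_nonpos hb0 ?_ hδ₂.le
        calc 1 - z.re = (1 - z).re := by simp [Complex.sub_re]
          _ ≤ |(1 - z).re| := le_abs_self _
          _ ≤ ‖1 - z‖ := Complex.abs_re_le_norm _
      have h2 : Real.exp (-(Real.pi * |δ.im|)) ≤ Real.exp (Complex.arg (1 - z) * δ.im) := by
        apply Real.exp_le_exp.mpr
        have harg : |Complex.arg (1 - z)| ≤ Real.pi := Complex.abs_arg_le_pi _
        calc -(Real.pi * |δ.im|) ≤ -(|Complex.arg (1-z)| * |δ.im|) := by
              nlinarith [abs_nonneg δ.im]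
          _ = -|Complex.arg (1-z) * δ.im| := by rw [abs_mul]
          _ ≤ Complex.arg (1-z) * δ.im := neg_abs_le _
      calc ‖1-z‖ ^ δ.re / Real.exp (Complex.arg (1-z) * δ.im)
          ≤ (1 - z.re) ^ δ.re / Real.exp (-(Real.pi * |δ.im|)) :=
            div_le_div₀ (Real.rpow_nonneg hb0.le _) h1 (Real.exp_pos _) h2
        _ = C * (1 - z.re) ^ δ.re := by
            rw [Real.exp_neg, div_eq_mul_inv, inv_inv, mul_comm]
    have habs2 : ‖(∑ k ∈ Finset.range N, a k * z ^ k) - (1-z)^(-δ)‖ ≤ η :=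
      hNa z hzball
    have hw0 : 0 ≤ 1 - ‖z‖ ^ 2 := by
      nlinarith [norm_nonneg z]
    have hw1 : (1 - ‖z‖ ^ 2) ^ (m-1) ≤ 1 := by
      apply pow_le_one₀ hw0
      nlinarith [norm_nonneg z]
    rw [hkey, norm_mul]
    have hprod : ‖(1-z)^δ‖ *
        ‖(∑ k ∈ Finset.range N, a k * z ^ k) - (1-z)^(-δ)‖
        ≤ (C * (1 - z.re) ^ δ.re) * η :=
      mul_le_mul hcb habs2 (norm_nonneg _) (by positivity)
    have hsq : ((1 - z.re) ^ δ.re)^2 = (1 - z.re) ^ (2*δ.re) := by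
      rw [sq, ← Real.rpow_add hb0]
      ring_nf
    calc (‖(1-z)^δ‖ *
          ‖(∑ k ∈ Finset.range N, a k * z ^ k) - (1-z)^(-δ)‖)^2 *
          (1 - ‖z‖ ^ 2) ^ (m-1)
        ≤ ((C * (1 - z.re) ^ δ.re) * η)^2 * 1 := by
          apply mul_le_mul _ hw1 (by positivity) (by positivity)
          exact pow_le_pow_left₀ (by positivity) hprod 2
      _ = (η^2 * C^2) * D z := by
          rw [mul_one, mul_pow, mul_pow, hsq, hD]
          ring
  -- integral bound
  have hmono : (∫ z in Metric.ball (0:ℂ) 1,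
      ‖(∑ k ∈ c.support, c k * (1 - z) ^ δ * z ^ k) - 1‖ ^ 2 *
        (1 - ‖z‖ ^ 2) ^ (m - 1))
      ≤ ∫ z in Metric.ball (0:ℂ) 1, (η^2 * C^2) * D z := by
    apply integral_mono_of_nonneg
    · filter_upwards [ae_restrict_mem measurableSet_ball] with z hz
      have habs : ‖z‖ < 1 := mem_ball_zero_iff.mp hz
      have hw0 : 0 ≤ 1 - ‖z‖ ^ 2 := by
        nlinarith [norm_nonneg z]
      positivity
    · exact hI.const_mul _
    · filter_upwards [ae_restrict_mem measurableSet_ball] with z hz using hpt z hz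
  have hval : (∫ z in Metric.ball (0:ℂ) 1, (η^2 * C^2) * D z) = (η^2 * C^2) * I := by
    rw [integral_const_mul]
  have hfin : (η^2 * C^2) * I < ε := by
    rw [hη2]
    have h1 : C^2 * I < B := by nlinarith
    calc ε / B * C^2 * I = ε * (C^2 * I) / B := by ring
      _ < ε * B / B := by gcongr
      _ = ε := by field_simp
  rw [hval] at hmono
  linarith
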